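/- (Corollary) Consider an interference network with K transmitters and G receivers in which every demand set satisfies 1 ≤ |S_j| ≤ K−1 and every message is requested by at least one receiver (for every k ∈ [K] there exists j ∈ [G] with k ∈ S_j). If d* maximizes ∑_{k=1}^K d_k over the degrees-of-freedom region and d* has a strictly unique largest coordinate (there is an index k₁ with d*_{k₁} > d*_k for all k ≠ k₁), then ∑_{k=1}^K d*_k = 1. -/

import Mathlib

private lemma sup'_add_const' {α : Type*} (s : Finset α) (h : s.Nonempty) (f : α → ℝ) (c : ℝ) :
    s.sup' h (fun k => f k + c) = s.sup' h f + c := by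
  apply le_antisymm
  · exact Finset.sup'_le _ _ fun k hk => by linarith [Finset.le_sup' f hk]
  · obtain ⟨k, hk, hfk⟩ := Finset.exists_mem_eq_sup' h f
    rw [hfk]
    exact Finset.le_sup' (fun k => f k + c) hk

theorem dof_unique_max_sum_one {K G : ℕ}
    (S : Fin G → Finset (Fin K))
    (hcard : ∀ j, 1 ≤ (S j).card ∧ (S j).card + 1 ≤ K)
    (hreq : ∀ k : Fin K, ∃ j, k ∈ S j)
    (hne : ∀ j, ((S j)ᶜ : Finset (Fin K)).Nonempty)
    (dstar : Fin K → ℝ)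
    (hd0 : ∀ k, 0 ≤ dstar k)
    (hdof : ∀ j, (∑ k ∈ S j, dstar k) + ((S j)ᶜ).sup' (hne j) dstar ≤ 1)
    (hmax : ∀ d : Fin K → ℝ, (∀ k, 0 ≤ d k) →
      (∀ j, (∑ k ∈ S j, d k) + ((S j)ᶜ).sup' (hne j) d ≤ 1) →
      ∑ k, d k ≤ ∑ k, dstar k)
    (huniq : ∃ k₁ : Fin K, ∀ k, k ≠ k₁ → dstar k < dstar k₁) :
    ∑ k, dstar k = 1 := by
  obtain ⟨k₁, hk₁⟩ := huniq
  -- Lower bound: the indicator of k₁ is feasible with sum 1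
  have hlow : (1:ℝ) ≤ ∑ k, dstar k := by
    have := hmax (fun k => if k = k₁ then (1:ℝ) else 0)
      (fun k => by split <;> norm_num)
      (fun j => by
        by_cases hk : k₁ ∈ S j
        · have hsum : ∑ k ∈ S j, (if k = k₁ then (1:ℝ) else 0) = 1 := by
            simp [Finset.sum_ite_eq', hk]
          have hsup : ((S j)ᶜ).sup' (hne j) (fun k => if k = k₁ then (1:ℝ) else 0) ≤ 0 := by
            apply Finset.sup'_le
            intro k hkc
            have : k ≠ k₁ := fun h => (Finset.mem_compl.mp hkc) (h ▸ hk)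
            simp [this]
          linarith
        · have hsum : ∑ k ∈ S j, (if k = k₁ then (1:ℝ) else 0) = 0 := by
            simp [Finset.sum_ite_eq', hk]
          have hsup : ((S j)ᶜ).sup' (hne j) (fun k => if k = k₁ then (1:ℝ) else 0) ≤ 1 := by
            apply Finset.sup'_le
            intro k _
            split <;> norm_num
          linarith)
    simpa [Finset.sum_ite_eq'] using this
  -- K ≥ 2
  obtain ⟨j₀, hj₀⟩ := hreq k₁
  have hK2 : 2 ≤ K := by have := hcard j₀; omega
  by_cases h1 : ∃ j, (S j).card + 1 = K
  · -- Case 1: some demand set has size K-1; its constraint reads ∑ dstar ≤ 1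
    obtain ⟨j, hj⟩ := h1
    have hcc : ((S j)ᶜ : Finset (Fin K)).card = 1 := by
      rw [Finset.card_compl, Fintype.card_fin]; omega
    obtain ⟨i, hi⟩ := Finset.card_eq_one.mp hcc
    have hsup : ((S j)ᶜ).sup' (hne j) dstar = dstar i := by
      apply le_antisymm
      · apply Finset.sup'_le
        intro k hk
        rw [hi, Finset.mem_singleton] at hk
        rw [hk]
      · exact Finset.le_sup' dstar (by rw [hi]; exact Finset.mem_singleton_self i)
    have hSj : S j = ({i} : Finset (Fin K))ᶜ := by
      rw [← hi, compl_compl]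
    have htot : ∑ k ∈ S j, dstar k + dstar i = ∑ k, dstar k := by
      rw [hSj]
      have := Finset.sum_compl_add_sum ({i} : Finset (Fin K)) dstar
      simpa using this
    have := hdof j
    rw [hsup, htot] at this
    linarith
  · -- Case 2: every demand set has size ≤ K-2; perturb to contradict maximality
    exfalso
    push_neg at h1
    have h2 : ∀ j, (S j).card + 2 ≤ K := by
      intro j
      have := (hcard j).2
      have := h1 j
      omega
    -- gap
    have hPne : (Finset.univ.erase k₁ : Finset (Fin K)).Nonempty := by
      rw [← Finset.card_pos, Finset.card_erase_of_mem (Finset.mem_univ _),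
        Finset.card_univ, Fintype.card_fin]
      omega
    set g : ℝ := (Finset.univ.erase k₁).inf' hPne (fun k => dstar k₁ - dstar k) with hgdef
    have hg : 0 < g := by
      rw [hgdef]
      rw [Finset.lt_inf'_iff]
      intro k hk
      have : k ≠ k₁ := Finset.ne_of_mem_erase hk
      have := hk₁ k this
      linarith
    have hgle : ∀ k, k ≠ k₁ → g ≤ dstar k₁ - dstar k := by
      intro k hk
      exact Finset.inf'_le _ (Finset.mem_erase.mpr ⟨hk, Finset.mem_univ k⟩)
    set ε : ℝ := g / K with hεdef
    have hKpos : (0:ℝ) < K := by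
      have : (0:ℕ) < K := by omega
      exact_mod_cast this
    have hε : 0 < ε := by rw [hεdef]; positivity
    have hεg : ((K:ℝ) - 1) * ε ≤ g := by
      have ha : ((K:ℝ) - 1) * ε ≤ (K:ℝ) * ε := by nlinarith
      have hb : (K:ℝ) * ε = g := by rw [hεdef]; field_simp
      linarith
    set d2 : Fin K → ℝ :=
      fun k => dstar k + ε - (if k = k₁ then ((K:ℝ) - 1) * ε else 0) with hd2
    have hd2k₁ : d2 k₁ = dstar k₁ + ε - ((K:ℝ) - 1) * ε := by simp [hd2]
    -- key ordering fact
    have hord : ∀ k, k ≠ k₁ → dstar k + ε ≤ d2 k₁ := by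
      intro k hk
      have := hgle k hk
      rw [hd2k₁]
      linarith
    have hd2ne : ∀ k, k ≠ k₁ → d2 k = dstar k + ε := by
      intro k hk; simp [hd2, hk]
    -- sum of d2 over any finset
    have hsum2 : ∀ s : Finset (Fin K), ∑ k ∈ s, d2 k =
        ∑ k ∈ s, dstar k + s.card * ε - (if k₁ ∈ s then ((K:ℝ) - 1) * ε else 0) := by
      intro s
      rw [hd2]
      rw [Finset.sum_sub_distrib, Finset.sum_add_distrib, Finset.sum_const,
        Finset.sum_ite_eq' s k₁ (fun _ => ((K:ℝ) - 1) * ε), nsmul_eq_mul]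
    -- nonnegativity
    have hd2pos : ∀ k, 0 ≤ d2 k := by
      intro k
      by_cases hk : k = k₁
      · obtain ⟨k₂, hk₂⟩ := hPne
        have hk₂ne : k₂ ≠ k₁ := Finset.ne_of_mem_erase hk₂
        have := hord k₂ hk₂ne
        have := hd0 k₂
        rw [hk]; linarith
      · rw [hd2ne k hk]; have := hd0 k; linarith
    -- feasibility
    have hfeas : ∀ j, (∑ k ∈ S j, d2 k) + ((S j)ᶜ).sup' (hne j) d2 ≤ 1 := by
      intro j
      have hcK : ((S j).card : ℝ) + 2 ≤ (K : ℝ) := by exact_mod_cast h2 j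
      by_cases hk : k₁ ∈ S j
      · have hsup : ((S j)ᶜ).sup' (hne j) d2 = ((S j)ᶜ).sup' (hne j) dstar + ε := by
          rw [← sup'_add_const' ((S j)ᶜ) (hne j) dstar ε]
          apply Finset.sup'_congr _ rfl
          intro k hkc
          exact hd2ne k (fun h => (Finset.mem_compl.mp hkc) (h ▸ hk))
        rw [hsum2, hsup, if_pos hk]
        have := hdof j
        nlinarith [Nat.cast_nonneg (α := ℝ) (S j).card]
      · have hsup : ((S j)ᶜ).sup' (hne j) d2 = d2 k₁ := by
          apply le_antisymm
          · apply Finset.sup'_le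
            intro k hkc
            by_cases hkk : k = k₁
            · rw [hkk]
            · rw [hd2ne k hkk]; exact hord k hkk
          · exact Finset.le_sup' d2 (Finset.mem_compl.mpr hk)
        have hsupstar : dstar k₁ ≤ ((S j)ᶜ).sup' (hne j) dstar :=
          Finset.le_sup' dstar (Finset.mem_compl.mpr hk)
        rw [hsum2, hsup, if_neg hk, hd2k₁]
        have := hdof j
        nlinarith [Nat.cast_nonneg (α := ℝ) (S j).card]
    -- contradiction with maximality
    have hsum2tot : ∑ k, d2 k = ∑ k, dstar k + ε := by
      rw [hsum2 Finset.univ, if_pos (Finset.mem_univ k₁), Finset.card_univ, Fintype.card_fin]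
      ring
    have := hmax d2 hd2pos hfeas
    rw [hsum2tot] at this
    linarith
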